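/- If M̂ is a closed maximal ideal of B₁(X) whose contraction M̂ ∩ C(X) is contained in some real maximal ideal of C(X), then there exists a unique real maximal ideal M of C(X) with M̂ = M_B. -/

import Mathlib

open Filter Topology

def CFun (X : Type*) [TopologicalSpace X] : Subring (X → ℝ) where
  carrier := {f | Continuous f}
  one_mem' := continuous_const
  zero_mem' := continuous_const
  add_mem' := fun hf hg => hf.add hg
  mul_mem' := fun hf hg => hf.mul hg
  neg_mem' := fun hf => hf.neg

def B1 (X : Type*) [TopologicalSpace X] : Subring (X → ℝ) where
  carrier := {f | ∃ u : ℕ → C(X, ℝ), ∀ x, Tendsto (fun n => u n x) atTop (𝓝 (f x))}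
  one_mem' := ⟨fun _ => 1, fun _ => tendsto_const_nhds⟩
  zero_mem' := ⟨fun _ => 0, fun _ => tendsto_const_nhds⟩
  add_mem' := by
    rintro f g ⟨u, hu⟩ ⟨v, hv⟩
    exact ⟨fun n => u n + v n, fun x => (hu x).add (hv x)⟩
  mul_mem' := by
    rintro f g ⟨u, hu⟩ ⟨v, hv⟩
    exact ⟨fun n => u n * v n, fun x => (hu x).mul (hv x)⟩
  neg_mem' := by
    rintro f ⟨u, hu⟩
    exact ⟨fun n => -u n, fun x => (hu x).neg⟩

theorem CFun_le_B1 (X : Type*) [TopologicalSpace X] : CFun X ≤ B1 X :=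
  fun f hf => ⟨fun _ => ⟨f, hf⟩, fun _ => tendsto_const_nhds⟩

def inclB (X : Type*) [TopologicalSpace X] : CFun X →+* B1 X :=
  Subring.inclusion (CFun_le_B1 X)

def idealB {X : Type*} [TopologicalSpace X] (I : Ideal (CFun X)) : Set (B1 X) :=
  {f | ∃ u : ℕ → CFun X, (∀ n, u n ∈ I) ∧
    ∀ x, Tendsto (fun n => (u n : X → ℝ) x) atTop (𝓝 ((f : X → ℝ) x))}

def IsRealMax {X : Type*} [TopologicalSpace X] (M : Ideal (CFun X)) : Prop :=
  M.IsMaximal ∧ Nonempty ((CFun X ⧸ M) ≃+* ℝ)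

def IsRealMaxB {X : Type*} [TopologicalSpace X] (M : Ideal (B1 X)) : Prop :=
  M.IsMaximal ∧ Nonempty ((B1 X ⧸ M) ≃+* ℝ)

def evalC {X : Type*} [TopologicalSpace X] (p : X) : CFun X →+* ℝ :=
  (Pi.evalRingHom (fun _ => ℝ) p).comp (CFun X).subtype

def evalB {X : Type*} [TopologicalSpace X] (p : X) : B1 X →+* ℝ :=
  (Pi.evalRingHom (fun _ => ℝ) p).comp (B1 X).subtype

def constB1 {X : Type*} [TopologicalSpace X] (r : ℝ) : B1 X :=
  ⟨fun _ => r, ⟨fun _ => ContinuousMap.const X r, fun _ => tendsto_const_nhds⟩⟩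

section Aux

variable {X : Type*} [TopologicalSpace X]

lemma contC (f : CFun X) : Continuous (f : X → ℝ) := f.2

/-- The constant-functions ring hom into `CFun X`. -/
def constHom (X : Type*) [TopologicalSpace X] : ℝ →+* CFun X where
  toFun r := ⟨fun _ => r, continuous_const⟩
  map_one' := rfl
  map_mul' _ _ := rfl
  map_zero' := rfl
  map_add' _ _ := rfl

@[simp] lemma constHom_apply (r : ℝ) (x : X) : ((constHom X r : CFun X) : X → ℝ) x = r := rfl

/-- `idealB M` is an ideal of `B1 X`. -/
def idealB' (M : Ideal (CFun X)) : Ideal (B1 X) where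
  carrier := idealB M
  zero_mem' := ⟨fun _ => 0, fun _ => M.zero_mem, fun x => by
    simpa using (tendsto_const_nhds : Tendsto (fun _ : ℕ => (0 : ℝ)) atTop (𝓝 0))⟩
  add_mem' := by
    rintro f g ⟨u, hu, hul⟩ ⟨v, hv, hvl⟩
    refine ⟨fun n => u n + v n, fun n => M.add_mem (hu n) (hv n), fun x => ?_⟩
    simpa using (hul x).add (hvl x)
  smul_mem' := by
    rintro c f ⟨u, hu, hul⟩
    obtain ⟨v, hv⟩ := c.2
    refine ⟨fun n => ⟨v n, (v n).continuous⟩ * u n, fun n => M.mul_mem_left _ (hu n),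
      fun x => ?_⟩
    simpa using (hv x).mul (hul x)

@[simp] lemma idealB'_coe (M : Ideal (CFun X)) : (idealB' M : Set (B1 X)) = idealB M := rfl

set_option maxHeartbeats 1000000 in
/-- Key analytic lemma: if `M` is a real maximal ideal of `CFun X`, then no sequence in `M`
converges pointwise to the constant function 1. -/
lemma one_not_mem_idealB (M : Ideal (CFun X)) (hM : IsRealMax M) :
    (1 : B1 X) ∉ idealB M := by
  obtain ⟨hmax, ⟨e⟩⟩ := hM
  rintro ⟨u, huM, hul⟩
  set ψ : CFun X →+* ℝ := e.toRingHom.comp (Ideal.Quotient.mk M) with hψdef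
  have hker : ∀ f : CFun X, ψ f = 0 ↔ f ∈ M := by
    intro f
    constructor
    · intro h
      have : Ideal.Quotient.mk M f = 0 := e.injective (by simpa [hψdef] using h)
      exact (Ideal.Quotient.eq_zero_iff_mem).1 this
    · intro h
      have : Ideal.Quotient.mk M f = 0 := (Ideal.Quotient.eq_zero_iff_mem).2 h
      simp [hψdef, this]
  have hconst : ∀ r : ℝ, ψ (constHom X r) = r := by
    have h : ψ.comp (constHom X) = RingHom.id ℝ := Subsingleton.elim _ _
    intro r
    exact RingHom.congr_fun h r
  have hnn : ∀ f : CFun X, (∀ x, 0 ≤ (f : X → ℝ) x) → 0 ≤ ψ f := by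
    intro f hf
    set g : CFun X := ⟨fun x => Real.sqrt ((f : X → ℝ) x),
      Real.continuous_sqrt.comp (contC f)⟩ with hg
    have hgg : g * g = f := by
      apply Subtype.ext
      funext x
      show Real.sqrt ((f : X → ℝ) x) * Real.sqrt ((f : X → ℝ) x) = (f : X → ℝ) x
      exact Real.mul_self_sqrt (hf x)
    calc (0 : ℝ) ≤ ψ g * ψ g := mul_self_nonneg _
      _ = ψ (g * g) := (map_mul ψ g g).symm
      _ = ψ f := by rw [hgg]
  have hmono : ∀ f g : CFun X, (∀ x, (f : X → ℝ) x ≤ (g : X → ℝ) x) → ψ f ≤ ψ g := by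
    intro f g h
    have h0 : 0 ≤ ψ (g - f) := by
      refine hnn _ fun x => ?_
      have : ((g - f : CFun X) : X → ℝ) x = (g : X → ℝ) x - (f : X → ℝ) x := rfl
      rw [this]
      linarith [h x]
    rw [map_sub] at h0
    linarith
  have habs : ∀ f a : CFun X, (∀ x, (a : X → ℝ) x = |(f : X → ℝ) x|) → ψ a = |ψ f| := by
    intro f a ha
    have h1 : 0 ≤ ψ a := hnn a fun x => by rw [ha x]; exact abs_nonneg _
    have h2 : a * a = f * f := by
      apply Subtype.ext
      funext x
      show (a : X → ℝ) x * (a : X → ℝ) x = (f : X → ℝ) x * (f : X → ℝ) x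
      rw [ha x]
      exact abs_mul_abs_self _
    have h3 : ψ a ^ 2 = |ψ f| ^ 2 := by
      rw [sq_abs]
      have := congrArg ψ h2
      rw [map_mul, map_mul] at this
      rw [sq, sq]
      exact this
    exact (sq_eq_sq₀ h1 (abs_nonneg _)).1 h3
  have hu0 : ∀ n, ψ (u n) = 0 := fun n => (hker _).2 (huM n)
  -- the truncated functions
  set m : ℕ → CFun X := fun n =>
    ⟨fun x => min (((u n : X → ℝ) x - 1) * ((u n : X → ℝ) x - 1)) 1,
      (((contC (u n)).sub continuous_const).mul ((contC (u n)).sub continuous_const)).min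
        continuous_const⟩ with hm
  have hmval : ∀ n x, (m n : X → ℝ) x
      = min (((u n : X → ℝ) x - 1) * ((u n : X → ℝ) x - 1)) 1 := fun n x => rfl
  have hm0 : ∀ n x, 0 ≤ (m n : X → ℝ) x := by
    intro n x
    rw [hmval]
    exact le_min (mul_self_nonneg _) zero_le_one
  have hm1 : ∀ n x, (m n : X → ℝ) x ≤ 1 := by
    intro n x
    rw [hmval]
    exact min_le_right _ _
  have hψm : ∀ n, ψ (m n) = 1 := by
    intro n
    set f : CFun X := (u n - constHom X 1) * (u n - constHom X 1) with hf
    have hfval : ∀ x, (f : X → ℝ) x = ((u n : X → ℝ) x - 1) * ((u n : X → ℝ) x - 1) :=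
      fun x => rfl
    have hψf : ψ f = 1 := by
      rw [hf, map_mul, map_sub, hu0, hconst]
      norm_num
    set b : CFun X := ⟨fun x => max (((u n : X → ℝ) x - 1) * ((u n : X → ℝ) x - 1)) 1,
      (((contC (u n)).sub continuous_const).mul ((contC (u n)).sub continuous_const)).max
        continuous_const⟩ with hb
    have e1 : ψ (m n) + ψ b = 2 := by
      rw [← map_add]
      have : m n + b = f + constHom X 1 := by
        apply Subtype.ext
        funext x
        show (m n : X → ℝ) x + (b : X → ℝ) x = (f : X → ℝ) x + 1
        rw [hmval, hfval]
        have h := min_add_max (((u n : X → ℝ) x - 1) * ((u n : X → ℝ) x - 1)) (1 : ℝ)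
        show min _ 1 + max _ 1 = _
        linarith
      rw [this, map_add, hψf, hconst]
      norm_num
    have e2 : ψ b - ψ (m n) = 0 := by
      rw [← map_sub]
      have := habs (f - constHom X 1) (b - m n) (fun x => by
        show (b : X → ℝ) x - (m n : X → ℝ) x = |(f : X → ℝ) x - 1|
        rw [hmval, hfval]
        have h := max_sub_min_eq_abs (((u n : X → ℝ) x - 1) * ((u n : X → ℝ) x - 1)) (1 : ℝ)
        rw [abs_sub_comm]
        show max _ 1 - min _ 1 = _
        linarith)
      rw [this, map_sub, hψf, hconst]
      norm_num
    linarith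
  -- pointwise convergence of m n x to 0 : we only need eventual smallness
  have hsmall : ∀ x : X, ∃ n, (m n : X → ℝ) x < 1 := by
    intro x
    have h1 : Tendsto (fun n => (u n : X → ℝ) x) atTop (𝓝 1) := by
      have := hul x
      simpa using this
    obtain ⟨n₀, hn₀⟩ := (Metric.tendsto_atTop.1 h1) (1 / 2) (by norm_num)
    refine ⟨n₀, ?_⟩
    have hd := hn₀ n₀ le_rfl
    rw [Real.dist_eq] at hd
    rw [hmval]
    have habs2 : ((u n₀ : X → ℝ) x - 1) * ((u n₀ : X → ℝ) x - 1) < 1 := by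
      have := abs_nonneg ((u n₀ : X → ℝ) x - 1)
      nlinarith [abs_mul_abs_self ((u n₀ : X → ℝ) x - 1)]
    calc min _ 1 ≤ _ := min_le_left _ _
      _ < 1 := habs2
  -- the series
  have hsummable : ∀ x : X, Summable (fun n => (1 / 2 : ℝ) ^ n * (m n : X → ℝ) x) := by
    intro x
    refine Summable.of_nonneg_of_le (fun n => mul_nonneg (by positivity) (hm0 n x))
      (fun n => ?_) summable_geometric_two
    exact mul_le_of_le_one_right (by positivity) (hm1 n x)
  set hfun : X → ℝ := fun x => ∑' n, (1 / 2 : ℝ) ^ n * (m n : X → ℝ) x with hfundef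
  have hcontH : Continuous hfun := by
    refine continuous_tsum (fun n => continuous_const.mul (contC (m n)))
      summable_geometric_two (fun n x => ?_)
    rw [Real.norm_eq_abs, abs_of_nonneg (mul_nonneg (by positivity) (hm0 n x))]
    exact mul_le_of_le_one_right (by positivity) (hm1 n x)
  set H : CFun X := ⟨hfun, hcontH⟩ with hH
  have hHval : ∀ x, (H : X → ℝ) x = ∑' n, (1 / 2 : ℝ) ^ n * (m n : X → ℝ) x := fun x => rfl
  -- partial sums
  set P : ℕ → CFun X := fun N => ∑ n ∈ Finset.range N, constHom X ((1 / 2 : ℝ) ^ n) * m n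
    with hP
  have hPval : ∀ N x, (P N : X → ℝ) x
      = ∑ n ∈ Finset.range N, (1 / 2 : ℝ) ^ n * (m n : X → ℝ) x := by
    intro N x
    have h1 : ((P N : CFun X) : X → ℝ)
        = ∑ n ∈ Finset.range N, ((constHom X ((1 / 2 : ℝ) ^ n) * m n : CFun X) : X → ℝ) := by
      rw [hP]
      exact map_sum ((CFun X).subtype) _ _
    rw [h1, Finset.sum_apply]
    rfl
  have hψP : ∀ N, ψ (P N) = ∑ n ∈ Finset.range N, (1 / 2 : ℝ) ^ n := by
    intro N
    rw [hP, map_sum]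
    refine Finset.sum_congr rfl fun n _ => ?_
    rw [map_mul, hconst, hψm, mul_one]
  have hPleH : ∀ N, ψ (P N) ≤ ψ H := by
    intro N
    refine hmono _ _ fun x => ?_
    rw [hPval, hHval]
    exact Summable.sum_le_tsum (Finset.range N) (fun i _ => mul_nonneg (by positivity) (hm0 i x))
      (hsummable x)
  have h2leH : (2 : ℝ) ≤ ψ H := by
    have htend : Tendsto (fun N => ψ (P N)) atTop (𝓝 2) := by
      have h := (hasSum_geometric_two).tendsto_sum_nat
      have heq : (fun N => ψ (P N)) = fun N => ∑ n ∈ Finset.range N, (1 / 2 : ℝ) ^ n :=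
        funext hψP
      rw [heq]
      exact h
    exact le_of_tendsto' htend hPleH
  have hHle2 : ψ H ≤ 2 := by
    have hle2 : ∀ x, (H : X → ℝ) x ≤ ((constHom X 2 : CFun X) : X → ℝ) x := by
      intro x
      rw [hHval, constHom_apply]
      calc ∑' n, (1 / 2 : ℝ) ^ n * (m n : X → ℝ) x
          ≤ ∑' n, (1 / 2 : ℝ) ^ n := by
            refine Summable.tsum_le_tsum (fun n => ?_) (hsummable x) summable_geometric_two
            exact mul_le_of_le_one_right (by positivity) (hm1 n x)
        _ = 2 := tsum_geometric_two
    have := hmono H (constHom X 2) hle2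
    rwa [hconst] at this
  have hψH : ψ H = 2 := le_antisymm hHle2 h2leH
  -- the contradiction function
  set k : CFun X := ⟨fun x => 2 - hfun x, continuous_const.sub hcontH⟩ with hk
  have hkH : k + H = constHom X 2 := by
    apply Subtype.ext
    funext x
    show (2 - hfun x) + hfun x = 2
    ring
  have hkmem : k ∈ M := by
    rw [← hker]
    have h := congrArg ψ hkH
    rw [map_add, hconst, hψH] at h
    linarith
  have hkpos : ∀ x, 0 < (k : X → ℝ) x := by
    intro x
    have hval : (k : X → ℝ) x = 2 - hfun x := rfl
    rw [hval, hfundef]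
    obtain ⟨n₀, hn₀⟩ := hsmall x
    have hlt : ∑' n, (1 / 2 : ℝ) ^ n * (m n : X → ℝ) x < ∑' n, (1 / 2 : ℝ) ^ n := by
      refine Summable.tsum_lt_tsum_of_nonneg (i := n₀) (fun n => mul_nonneg (by positivity) (hm0 n x))
        (fun n => mul_le_of_le_one_right (by positivity) (hm1 n x)) ?_ summable_geometric_two
      calc (1 / 2 : ℝ) ^ n₀ * (m n₀ : X → ℝ) x < (1 / 2 : ℝ) ^ n₀ * 1 := by
            exact mul_lt_mul_of_pos_left hn₀ (by positivity)
        _ = (1 / 2 : ℝ) ^ n₀ := mul_one _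
    rw [tsum_geometric_two] at hlt
    linarith
  have hkunit : IsUnit k := by
    refine isUnit_iff_exists_inv.2 ⟨⟨fun x => ((k : X → ℝ) x)⁻¹,
      (contC k).inv₀ fun x => (hkpos x).ne'⟩, ?_⟩
    apply Subtype.ext
    funext x
    show (k : X → ℝ) x * ((k : X → ℝ) x)⁻¹ = 1
    exact mul_inv_cancel₀ (hkpos x).ne'
  exact hmax.ne_top (M.eq_top_of_isUnit_mem hkmem hkunit)

end Aux

theorem closed_maximal_is_idealB {X : Type*} [TopologicalSpace X]
    (N : Ideal (B1 X)) (hN : N.IsMaximal)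
    (hclosed : idealB (Ideal.comap (inclB X) N) = (↑N : Set (B1 X)))
    (hcont : ∃ M : Ideal (CFun X), IsRealMax M ∧ Ideal.comap (inclB X) N ≤ M) :
    ∃! M : Ideal (CFun X), IsRealMax M ∧ (↑N : Set (B1 X)) = idealB M := by
  obtain ⟨M₀, hM₀real, hle⟩ := hcont
  -- N ≤ idealB M₀
  have hNle : ∀ f : B1 X, f ∈ N → f ∈ idealB M₀ := by
    intro f hf
    have : f ∈ idealB (Ideal.comap (inclB X) N) := by rw [hclosed]; exact hf
    obtain ⟨u, hu, hul⟩ := this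
    exact ⟨u, fun n => hle (hu n), hul⟩
  have hne : idealB' M₀ ≠ ⊤ := by
    intro h
    have : (1 : B1 X) ∈ idealB' M₀ := h ▸ Submodule.mem_top
    exact one_not_mem_idealB M₀ hM₀real this
  have hEq : N = idealB' M₀ := hN.eq_of_le hne hNle
  have hNset : (↑N : Set (B1 X)) = idealB M₀ := by rw [hEq]; rfl
  -- any real max ideal M with ↑N = idealB M equals comap (inclB X) N
  have hcm : ∀ M : Ideal (CFun X), IsRealMax M → (↑N : Set (B1 X)) = idealB M →
      M = Ideal.comap (inclB X) N := by
    intro M hMr hMs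
    have h1 : M ≤ Ideal.comap (inclB X) N := by
      intro f hf
      show inclB X f ∈ N
      have hmem : inclB X f ∈ idealB M := by
        refine ⟨fun _ => f, fun _ => hf, fun x => ?_⟩
        exact tendsto_const_nhds
      rw [← SetLike.mem_coe, hMs]
      exact hmem
    have h2 : Ideal.comap (inclB X) N ≠ ⊤ := by
      intro h
      have h1mem : (1 : CFun X) ∈ Ideal.comap (inclB X) N := h ▸ Submodule.mem_top
      have : (1 : B1 X) ∈ N := by
        have : inclB X 1 ∈ N := h1mem
        simpa using this
      exact hN.ne_top ((Ideal.eq_top_iff_one N).2 this)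
    exact hMr.1.eq_of_le h2 h1
  refine ⟨M₀, ⟨hM₀real, hNset⟩, ?_⟩
  intro M' hM'
  rw [hcm M' hM'.1 hM'.2, hcm M₀ hM₀real hNset]
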